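/- If P is a finite graded bounded lattice admitting an EL-labeling, then the antichain cutsets of P are exactly the level sets (sets of elements of a fixed rank). -/

import Mathlib

/-- An antichain cutset: a set intersecting each maximal chain in exactly one element. -/
def IsAntichainCutset {α : Type*} [PartialOrder α] (A : Set α) : Prop :=
  ∀ c : Set α, IsMaxChain (· ≤ ·) c → ∃! x, x ∈ c ∧ x ∈ A

/-- A poset is strongly connected if any two maximal chains are connected by a finite
sequence of maximal chains in which consecutive chains have symmetric difference of
cardinality two. -/
def StronglyConnectedOrder (α : Type*) [PartialOrder α] : Prop :=
  ∀ c d : Set α, IsMaxChain (· ≤ ·) c → IsMaxChain (· ≤ ·) d →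
    ∃ (n : ℕ) (f : ℕ → Set α), f 0 = c ∧ f n = d ∧
      (∀ i ≤ n, IsMaxChain (· ≤ ·) (f i)) ∧
      ∀ i < n, (symmDiff (f i) (f (i + 1))).ncard = 2

/-- The word of labels along a chain, listed as a list of elements. -/
def chainWord {α Λ : Type*} (l : α → α → Λ) (L : List α) : List Λ :=
  (L.zip L.tail).map fun p => l p.1 p.2

/-- A saturated chain from x to y: a list starting at x, ending at y, each step a cover. -/
def IsSaturatedChain {α : Type*} [PartialOrder α] (x y : α) (L : List α) : Prop :=
  L.head? = some x ∧ L.getLast? = some y ∧ L.Chain' (· ⋖ ·)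

/-- An EL-labeling (with labels compared by `le`, `lt`): on each interval [x,y] there is
a unique ascending maximal chain, which lexicographically strictly precedes every other
maximal chain of [x,y]. -/
def IsELLabeling {α Λ : Type*} [PartialOrder α] (le lt : Λ → Λ → Prop)
    (l : α → α → Λ) : Prop :=
  ∀ x y : α, x ≤ y →
    ∃ L : List α, IsSaturatedChain x y L ∧ (chainWord l L).Chain' le ∧
      ∀ M : List α, IsSaturatedChain x y M → M ≠ L →
        ¬ (chainWord l M).Chain' le ∧ List.Lex lt (chainWord l L) (chainWord l M)

section ACC
variable {α Λ : Type*} [Lattice α] [BoundedOrder α] [Fintype α] [PartialOrder Λ]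
  (l : α → α → Λ) (hEL : IsELLabeling (· ≤ ·) (· < ·) l)
  (r : α → ℕ) (hr : ∀ x y : α, x ⋖ y → r y = r x + 1) (hr0 : r ⊥ = 0)

set_option linter.unusedSectionVars false
set_option linter.unusedVariables false

lemma chainWord_cons_cons (x y : α) (T : List α) :
    chainWord l (x :: y :: T) = l x y :: chainWord l (y :: T) := rfl

include hEL hr hr0

/-- rank along a saturated chain -/
lemma rank_satChain : ∀ (L : List α) (x y : α), IsSaturatedChain x y L →
    r y + 1 = r x + L.length := by
  intro L
  induction L with
  | nil => intro x y h; simp [IsSaturatedChain] at h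
  | cons a T ih =>
    intro x y h
    obtain ⟨h1, h2, h3⟩ := h
    simp at h1; subst h1
    cases T with
    | nil => simp [List.getLast?] at h2; subst h2; simp
    | cons b T' =>
      have hab : a ⋖ b := (List.isChain_cons_cons.mp h3).1
      have h3' : (b :: T').Chain' (· ⋖ ·) := (List.isChain_cons_cons.mp h3).2
      have h2' : (b :: T').getLast? = some y := by
        rw [show (a :: b :: T') = [a] ++ (b :: T') from rfl, List.getLast?_append] at h2
        simpa [List.getLast?_eq_some_getLast] using h2
      have := ih b y ⟨rfl, h2', h3'⟩
      have := hr _ _ hab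
      simp [List.length_cons] at *
      omega

lemma satChain_ne_nil {x y : α} {L : List α} (h : IsSaturatedChain x y L) : L ≠ [] := by
  intro he; rw [he] at h; simp [IsSaturatedChain] at h

lemma rank_lt_of_lt {x y : α} (hxy : x < y) : r x < r y := by
  obtain ⟨L, hL, -, -⟩ := hEL x y hxy.le
  have hlen := rank_satChain l hEL r hr hr0 L x y hL
  rcases L with - | ⟨a, T⟩
  · exact absurd rfl (satChain_ne_nil l hEL r hr hr0 hL)
  rcases T with - | ⟨b, T'⟩
  · obtain ⟨h1, h2, -⟩ := hL
    simp [List.getLast?] at h1 h2; subst h1; subst h2; exact absurd rfl hxy.ne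
  · simp [List.length_cons] at hlen; omega

lemma rank_le_of_le {x y : α} (hxy : x ≤ y) : r x ≤ r y := by
  rcases eq_or_lt_of_le hxy with h | h
  · rw [h]
  · exact (rank_lt_of_lt l hEL r hr hr0 h).le

lemma covby_of_rank {x y : α} (hxy : x < y) (hR : r y = r x + 1) : x ⋖ y := by
  refine ⟨hxy, fun z hz hzy => ?_⟩
  have := rank_lt_of_lt l hEL r hr hr0 hz
  have := rank_lt_of_lt l hEL r hr hr0 hzy
  omega

lemma eq_of_chain_rank {c : Set α} (hc : IsChain (· ≤ ·) c) {x y : α}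
    (hx : x ∈ c) (hy : y ∈ c) (hR : r x = r y) : x = y := by
  rcases eq_or_ne x y with h | h
  · exact h
  rcases hc hx hy h with h' | h'
  · rcases eq_or_lt_of_le h' with h'' | h''
    · exact h''
    · exact absurd hR (by have := rank_lt_of_lt l hEL r hr hr0 h''; omega)
  · rcases eq_or_lt_of_le h' with h'' | h''
    · exact h''.symm
    · exact absurd hR (by have := rank_lt_of_lt l hEL r hr hr0 h''; omega)

lemma rank_eq_zero {x : α} (h : r x = 0) : x = ⊥ := by
  rcases eq_or_lt_of_le (bot_le : ⊥ ≤ x) with h' | h'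
  · exact h'.symm
  · have := rank_lt_of_lt l hEL r hr hr0 h'; omega

lemma rank_le_top (x : α) : r x ≤ r (⊤ : α) := rank_le_of_le l hEL r hr hr0 le_top

lemma rank_eq_top {x : α} (h : r x = r (⊤:α)) : x = ⊤ := by
  rcases eq_or_lt_of_le (le_top : x ≤ ⊤) with h' | h'
  · exact h'
  · have := rank_lt_of_lt l hEL r hr hr0 h'; omega

lemma bot_mem_maxChain {c : Set α} (hc : IsMaxChain (· ≤ ·) c) : ⊥ ∈ c := by
  have h : IsChain (· ≤ ·) (insert ⊥ c) := hc.1.insert (fun b _ _ => Or.inl bot_le)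
  have := hc.2 h (Set.subset_insert _ _)
  rw [this]; exact Set.mem_insert _ _

lemma top_mem_maxChain {c : Set α} (hc : IsMaxChain (· ≤ ·) c) : ⊤ ∈ c := by
  have h : IsChain (· ≤ ·) (insert ⊤ c) := hc.1.insert (fun b _ _ => Or.inr le_top)
  have := hc.2 h (Set.subset_insert _ _)
  rw [this]; exact Set.mem_insert _ _

lemma succ_in_maxChain {c : Set α} (hc : IsMaxChain (· ≤ ·) c) {x : α}
    (hx : x ∈ c) (hxt : x ≠ ⊤) : ∃ y ∈ c, x ⋖ y := by
  classical
  set S : Finset α := Finset.univ.filter (fun z => z ∈ c ∧ x < z) with hS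
  have hStop : (⊤ : α) ∈ S := by
    simp only [hS, Finset.mem_filter, Finset.mem_univ, true_and]
    exact ⟨top_mem_maxChain l hEL r hr hr0 hc, lt_of_le_of_ne le_top hxt⟩
  obtain ⟨y, hyS, hymin⟩ := S.exists_minimal ⟨⊤, hStop⟩
  simp only [hS, Finset.mem_filter, Finset.mem_univ, true_and] at hyS
  obtain ⟨hyc, hxy⟩ := hyS
  refine ⟨y, hyc, hxy, fun w hw hwy => ?_⟩
  have hwcomp : ∀ z ∈ c, w ≠ z → w ≤ z ∨ z ≤ w := by
    intro z hz hne
    rcases eq_or_ne z x with rfl | hzx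
    · exact Or.inr hw.le
    rcases hc.1 hz hx hzx with h | h
    · exact Or.inr (h.trans hw.le)
    · -- x ≤ z, x ≠ z so x < z, z ∈ S
      have hxz : x < z := lt_of_le_of_ne h (Ne.symm hzx)
      have hzS : z ∈ S := by
        simp only [hS, Finset.mem_filter, Finset.mem_univ, true_and]; exact ⟨hz, hxz⟩
      have hnzy : ¬ z < y := fun h => h.not_ge (hymin hzS h.le)
      rcases eq_or_ne z y with rfl | hzy
      · exact Or.inl hwy.le
      rcases hc.1 hz hyc hzy with h' | h'
      · exact absurd (lt_of_le_of_ne h' hzy) hnzy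
      · exact Or.inl (hwy.le.trans h')
  have hchain : IsChain (· ≤ ·) (insert w c) := hc.1.insert hwcomp
  have hwc : w ∈ c := by
    have := hc.2 hchain (Set.subset_insert _ _)
    rw [this]; exact Set.mem_insert _ _
  have hwS : w ∈ S := by
    simp only [hS, Finset.mem_filter, Finset.mem_univ, true_and]; exact ⟨hwc, hw⟩
  exact hwy.not_ge (hymin hwS hwy.le)

/-- every rank `k ≤ r ⊤` is attained in a maximal chain -/
lemma exists_rank_in_maxChain {c : Set α} (hc : IsMaxChain (· ≤ ·) c) :
    ∀ k ≤ r (⊤ : α), ∃ y ∈ c, r y = k := by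
  intro k
  induction k with
  | zero => intro _; exact ⟨⊥, bot_mem_maxChain l hEL r hr hr0 hc, hr0⟩
  | succ k ih =>
    intro hk
    obtain ⟨y, hyc, hyr⟩ := ih (by omega)
    have hyt : y ≠ ⊤ := fun h => by rw [h] at hyr; omega
    obtain ⟨z, hzc, hyz⟩ := succ_in_maxChain l hEL r hr hr0 hc hyc hyt
    exact ⟨z, hzc, by rw [hr _ _ hyz, hyr]⟩
lemma pairwise_lt_of_chain_cov {L : List α} (h : L.Chain' (· ⋖ ·)) :
    L.Pairwise (· < ·) :=
  List.isChain_iff_pairwise.mp (List.IsChain.imp (fun ⦃a b⦄ hab => hab.1) h)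

lemma mem_of_comparable : ∀ (L : List α) (x y z : α), L.Chain' (· ⋖ ·) →
    L.head? = some x → L.getLast? = some y → x ≤ z → z ≤ y →
    (∀ w ∈ L, z ≤ w ∨ w ≤ z) → z ∈ L := by
  intro L
  induction L with
  | nil => intro x y z _ h; simp at h
  | cons a T ih =>
    intro x y z hch hh hl hxz hzy hcomp
    simp at hh; subst hh
    cases T with
    | nil =>
      simp [List.getLast?] at hl; subst hl
      simp [le_antisymm hzy hxz]
    | cons b T' =>
      have hab : a ⋖ b := (List.isChain_cons_cons.mp hch).1
      have hch' : (b :: T').Chain' (· ⋖ ·) := (List.isChain_cons_cons.mp hch).2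
      have hl' : (b :: T').getLast? = some y := by
        rw [show (a :: b :: T') = [a] ++ (b :: T') from rfl, List.getLast?_append] at hl
        simpa [List.getLast?_eq_some_getLast] using hl
      rcases hcomp b (by simp) with hzb | hbz
      · rcases eq_or_lt_of_le hzb with rfl | hzb'
        · simp
        rcases eq_or_lt_of_le hxz with rfl | haz'
        · simp
        · exact absurd hzb' (hab.2 haz')
      · right
        exact ih b y z hch' rfl hl' hbz hzy (fun w hw => hcomp w (by simp [hw]))

lemma maxChain_of_satBT {L : List α} (h : IsSaturatedChain (⊥:α) ⊤ L) :
    IsMaxChain (· ≤ ·) {x | x ∈ L} := by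
  obtain ⟨hh, hl, hch⟩ := h
  have hpw := pairwise_lt_of_chain_cov l hEL r hr hr0 hch
  constructor
  · intro a ha b hb hne
    haveI : Std.Symm (fun p q : α => p ≤ q ∨ q ≤ p) := ⟨fun p q h => Or.symm h⟩
    exact (hpw.imp (fun {p q} h => Or.inl h.le) : L.Pairwise (fun p q : α => p ≤ q ∨ q ≤ p)).forall
      ha hb hne
  · intro t hchain hsub
    have ht : t ⊆ {x | x ∈ L} := by
      intro z hz
      have hcomp : ∀ w ∈ L, z ≤ w ∨ w ≤ z := by
        intro w hw
        rcases eq_or_ne z w with rfl | hne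
        · exact Or.inl le_rfl
        · exact hchain hz (hsub hw) hne
      exact mem_of_comparable l hEL r hr hr0 L ⊥ ⊤ z hch hh hl bot_le le_top hcomp
    exact Set.Subset.antisymm hsub ht

/-- build a saturated list from a maximal chain -/
lemma satBT_of_maxChain {c : Set α} (hc : IsMaxChain (· ≤ ·) c) :
    ∃ L : List α, IsSaturatedChain (⊥:α) ⊤ L ∧ {x | x ∈ L} = c := by
  classical
  set n := r (⊤ : α) with hn
  have hex : ∀ k, k ≤ n → ∃ y, y ∈ c ∧ r y = k := by
    intro k hk
    obtain ⟨y, hy, hyr⟩ := exists_rank_in_maxChain l hEL r hr hr0 hc k hk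
    exact ⟨y, hy, hyr⟩
  choose f hf hfr using fun k (hk : k ≤ n) => hex k hk
  set g : ℕ → α := fun k => if hk : k ≤ n then f k hk else ⊤ with hg
  have hgc : ∀ k, k ≤ n → g k ∈ c := by
    intro k hk; simp only [hg, dif_pos hk]; exact hf k hk
  have hgr : ∀ k, (hk : k ≤ n) → r (g k) = k := by
    intro k hk; simp only [hg, dif_pos hk]; exact hfr k hk
  refine ⟨(List.range (n+1)).map g, ⟨?_, ?_, ?_⟩, ?_⟩
  · -- head
    have h0 : (List.range (n+1)).head? = some 0 := by
      rw [List.range_succ_eq_map]; rfl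
    rw [List.head?_map, h0]
    simp only [Option.map_some]
    congr 1
    exact rank_eq_zero l hEL r hr hr0 (by rw [hgr 0 (Nat.zero_le n)])
  · -- last
    have : (List.range (n+1)).getLast? = some n := by
      rw [List.getLast?_range]; simp
    rw [List.getLast?_map, this]
    simp only [Option.map_some]
    congr 1
    exact rank_eq_top l hEL r hr hr0 (by rw [hgr n le_rfl])
  · -- chain of covers
    rw [List.Chain', List.isChain_map, List.isChain_range_succ]
    intro m hm
    have h1 : g m ∈ c := hgc m (by omega)
    have h2 : g (m+1) ∈ c := hgc (m+1) (by omega)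
    have hr1 : r (g m) = m := hgr m (by omega)
    have hr2 : r (g (m+1)) = m + 1 := hgr (m+1) (by omega)
    simp only [Nat.succ_eq_add_one]
    have hlt : g m < g (m+1) := by
      rcases eq_or_ne (g m) (g (m+1)) with he | hne
      · rw [he] at hr1; omega
      rcases hc.1 h1 h2 hne with h | h
      · exact lt_of_le_of_ne h hne
      · have := rank_lt_of_lt l hEL r hr hr0 (lt_of_le_of_ne h hne.symm); omega
    exact covby_of_rank l hEL r hr hr0 hlt (by omega)
  · -- set equality
    ext x
    simp only [Set.mem_setOf_eq, List.mem_map, List.mem_range]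
    constructor
    · rintro ⟨k, hk, rfl⟩; exact hgc k (by omega)
    · intro hx
      refine ⟨r x, by have := rank_le_top l hEL r hr hr0 x; omega, ?_⟩
      exact (eq_of_chain_rank l hEL r hr hr0 hc.1 (hgc _ (rank_le_top l hEL r hr hr0 x)) hx
        (hgr _ (rank_le_top l hEL r hr hr0 x))).symm ▸ rfl
omit hEL hr hr0 in
lemma lex_trans' {β : Type*} {rel : β → β → Prop} (htr : Transitive rel) :
    ∀ {a b c : List β}, List.Lex rel a b → List.Lex rel b c → List.Lex rel a c := by
  intro a b c hab
  induction hab generalizing c with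
  | nil => intro hac; cases hac <;> exact List.Lex.nil
  | @cons x as bs h ih =>
    intro hac
    cases hac with
    | cons h2 => exact List.Lex.cons (ih h2)
    | rel h2 => exact List.Lex.rel h2
  | @rel a as b bs h =>
    intro hac
    cases hac with
    | cons h2 => exact List.Lex.rel h
    | rel h2 => exact List.Lex.rel (htr h h2)

omit hEL hr hr0 in
lemma lex_irrefl' {β : Type*} {rel : β → β → Prop} (hir : ∀ x, ¬ rel x x) :
    ∀ (a : List β), ¬ List.Lex rel a a := by
  intro a
  induction a with
  | nil => intro h; cases h
  | cons x as ih =>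
    intro h
    cases h with
    | cons h2 => exact ih h2
    | rel h2 => exact hir _ h2

omit hEL hr hr0 in
lemma lex_append_left' {β : Type*} {rel : β → β → Prop} {t₁ t₂ : List β}
    (h : List.Lex rel t₁ t₂) : ∀ s : List β, List.Lex rel (s ++ t₁) (s ++ t₂) := by
  intro s
  induction s with
  | nil => exact h
  | cons x s ih => exact List.Lex.cons ih

omit hEL hr hr0 in
lemma lex_two {β : Type*} {rel : β → β → Prop} {p q p' q' : β}
    (h : List.Lex rel [p, q] [p', q']) (T : List β) :
    List.Lex rel (p :: q :: T) (p' :: q' :: T) := by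
  cases h with
  | rel h2 => exact List.Lex.rel h2
  | cons h2 =>
    cases h2 with
    | rel h3 => exact List.Lex.cons (List.Lex.rel h3)
    | cons h3 => cases h3

omit hEL hr hr0 in
lemma chainWord_append (a : α) : ∀ (P Q : List α),
    chainWord l (P ++ a :: Q) = chainWord l (P ++ [a]) ++ chainWord l (a :: Q) := by
  intro P
  induction P with
  | nil => intro Q; simp [chainWord]
  | cons p P' ih =>
    intro Q
    cases P' with
    | nil => simp [chainWord_cons_cons, chainWord]
    | cons p' P'' =>
      have h1 : (p :: p' :: P'') ++ a :: Q = p :: p' :: (P'' ++ a :: Q) := rfl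
      have h2 : (p :: p' :: P'') ++ [a] = p :: p' :: (P'' ++ [a]) := rfl
      rw [h1, h2, chainWord_cons_cons, chainWord_cons_cons]
      have := ih Q
      simp only [List.cons_append] at this ⊢
      rw [this]
omit hEL hr hr0 in
lemma find_descent : ∀ (L : List α), ¬ (chainWord l L).Chain' (· ≤ ·) →
    ∃ (P S : List α) (a b c : α), L = P ++ a :: b :: c :: S ∧ ¬ l a b ≤ l b c := by
  intro L
  induction L with
  | nil => intro h; exact absurd (by simp [chainWord, List.Chain'] : (chainWord l ([]:List α)).Chain' (· ≤ ·)) h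
  | cons x T ih =>
    intro h
    cases T with
    | nil => exact absurd (by simp [chainWord, List.Chain'] : (chainWord l [x]).Chain' (· ≤ ·)) h
    | cons y T' =>
      cases T' with
      | nil => exact absurd (by simp [chainWord, List.Chain'] : (chainWord l [x,y]).Chain' (· ≤ ·)) h
      | cons z T'' =>
        rw [chainWord_cons_cons, chainWord_cons_cons, List.Chain', List.isChain_cons_cons] at h
        push_neg at h
        by_cases hxy : l x y ≤ l y z
        · have h2 : ¬ (chainWord l (y :: z :: T'')).Chain' (· ≤ ·) := by
            intro hc
            exact (h hxy) hc
          obtain ⟨P, S, a, b, c, hdec, hnle⟩ := ih h2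
          exact ⟨x :: P, S, a, b, c, by rw [List.cons_append, ← hdec], hnle⟩
        · exact ⟨[], T'', x, y, z, rfl, hxy⟩

lemma descent_step {L : List α} (hL : IsSaturatedChain (⊥:α) ⊤ L)
    (hnot : ¬ (chainWord l L).Chain' (· ≤ ·)) :
    ∃ L' : List α, IsSaturatedChain (⊥:α) ⊤ L' ∧
      List.Lex (· < ·) (chainWord l L') (chainWord l L) ∧
      (symmDiff {x | x ∈ L} {x | x ∈ L'}).ncard = 2 := by
  obtain ⟨P, S, a, b, c, hdec, hnle⟩ := find_descent l L hnot
  obtain ⟨hh, hlast, hch⟩ := hL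
  rw [hdec] at hh hlast hch
  -- split the chain
  obtain ⟨hP, hrest, hlink⟩ := List.isChain_append.mp hch
  have hab : a ⋖ b := (List.isChain_cons_cons.mp hrest).1
  have hrest2 := (List.isChain_cons_cons.mp hrest).2
  have hbc : b ⋖ c := (List.isChain_cons_cons.mp hrest2).1
  have hcS : (c :: S).Chain' (· ⋖ ·) := (List.isChain_cons_cons.mp hrest2).2
  have hac : a ≤ c := (hab.lt.trans hbc.lt).le
  -- the ascending chain in [a,c]
  obtain ⟨M, hM, hMasc, hMuniq⟩ := hEL a c hac
  have habc_sat : IsSaturatedChain a c [a, b, c] := by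
    refine ⟨rfl, by simp, ?_⟩
    exact List.isChain_cons_cons.mpr ⟨hab, List.isChain_cons_cons.mpr ⟨hbc, List.isChain_singleton _⟩⟩
  have habc_word : chainWord l [a, b, c] = [l a b, l b c] := rfl
  have hne : [a, b, c] ≠ M := by
    rintro h
    rw [← h, habc_word] at hMasc
    exact hnle (List.isChain_cons_cons.mp hMasc).1
  obtain ⟨-, hlex⟩ := hMuniq [a, b, c] habc_sat hne
  -- M has length 3
  have hrc : r c = r a + 2 := by rw [hr _ _ hbc, hr _ _ hab]
  have hlenM : M.length = 3 := by
    have := rank_satChain l hEL r hr hr0 M a c hM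
    omega
  obtain ⟨m0, m1, m2, rfl⟩ := List.length_eq_three.mp hlenM
  obtain ⟨hMh, hMl, hMch⟩ := hM
  simp at hMh hMl
  have hm0 : a = m0 := hMh.symm
  subst hm0
  have hm2 : c = m2 := hMl.symm
  subst hm2
  set b' := m1 with hb'
  have hab' : a ⋖ b' := (List.isChain_cons_cons.mp hMch).1
  have hb'c : b' ⋖ c := (List.isChain_cons_cons.mp (List.isChain_cons_cons.mp hMch).2).1
  have hbb' : b' ≠ b := by
    intro h; exact hne (by rw [← h])
  have hMword : chainWord l [a, b', c] = [l a b', l b' c] := rfl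
  rw [hMword, habc_word] at hlex
  -- rank facts
  have hrb : r b = r a + 1 := hr _ _ hab
  have hrb' : r b' = r a + 1 := hr _ _ hab'
  have hPlt : ∀ p ∈ P, p < a ∧ p < b ∧ p < c ∧ ∀ s ∈ S, p < s := by
    have hpw := pairwise_lt_of_chain_cov l hEL r hr hr0 hch
    rw [List.pairwise_append] at hpw
    intro p hp
    exact ⟨hpw.2.2 p hp a (by simp), hpw.2.2 p hp b (by simp), hpw.2.2 p hp c (by simp),
      fun s hs => hpw.2.2 p hp s (by simp [hs])⟩
  have hSgt : ∀ s ∈ S, a < s ∧ b < s ∧ c < s := by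
    have hpw := pairwise_lt_of_chain_cov l hEL r hr hr0 hrest
    rw [List.pairwise_cons] at hpw
    have hpw2 := hpw.2
    rw [List.pairwise_cons] at hpw2
    have hpw3 := hpw2.2
    rw [List.pairwise_cons] at hpw3
    intro s hs
    exact ⟨hpw.1 s (by simp [hs]), hpw2.1 s (by simp [hs]), hpw3.1 s hs⟩
  -- b ∉ L', b' ∉ L
  have hbnot : b ∉ P ∧ b ≠ a ∧ b ≠ c ∧ b ∉ S := by
    refine ⟨fun h => absurd (hPlt b h).2.1 (lt_irrefl b), fun h => absurd hab.lt (h ▸ lt_irrefl _),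
      fun h => absurd hbc.lt (h ▸ lt_irrefl _), fun h => absurd (hSgt b h).2.1 (lt_irrefl b)⟩
  have hb'not : b' ∉ P ∧ b' ≠ a ∧ b' ≠ c ∧ b' ∉ S := by
    refine ⟨fun h => ?_, fun h => absurd hab'.lt (h ▸ lt_irrefl _),
      fun h => ?_, fun h => ?_⟩
    · have := rank_lt_of_lt l hEL r hr hr0 (hPlt b' h).1; omega
    · rw [h] at hrb'; omega
    · have := rank_lt_of_lt l hEL r hr hr0 (hSgt b' h).2.2
      have := rank_lt_of_lt l hEL r hr hr0 hb'c.lt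
      omega
  set L' : List α := P ++ a :: b' :: c :: S with hL'def
  have hmemL : ∀ x, x ∈ P ++ a :: b :: c :: S ↔ (x ∈ P ∨ x = a ∨ x = b ∨ x = c ∨ x ∈ S) := by
    intro x; simp [or_assoc]
  have hmemL' : ∀ x, x ∈ L' ↔ (x ∈ P ∨ x = a ∨ x = b' ∨ x = c ∨ x ∈ S) := by
    intro x; simp [hL'def, or_assoc]
  refine ⟨L', ⟨?_, ?_, ?_⟩, ?_, ?_⟩
  · -- head
    cases P with
    | nil =>
      rw [hL'def]
      simp only [List.nil_append, List.head?_cons] at hh ⊢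
      exact hh
    | cons p P'' =>
      rw [hL'def]
      simp only [List.cons_append, List.head?_cons] at hh ⊢
      exact hh
  · -- last
    have hrw : P ++ a :: b :: c :: S = (P ++ [a, b]) ++ (c :: S) := by simp
    rw [hrw, List.getLast?_append] at hlast
    have hsome : ∃ w, (c :: S).getLast? = some w :=
      Option.isSome_iff_exists.mp (List.getLast?_isSome.mpr (by simp))
    obtain ⟨w, hw⟩ := hsome
    rw [hw] at hlast
    simp only [Option.some_or] at hlast
    have hrw' : L' = (P ++ [a, b']) ++ (c :: S) := by simp [hL'def]
    rw [hrw', List.getLast?_append, hw]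
    simpa using hlast
  · -- chain'
    refine List.isChain_append.mpr ⟨hP, ?_, ?_⟩
    · exact List.isChain_cons_cons.mpr ⟨hab', List.isChain_cons_cons.mpr ⟨hb'c, hcS⟩⟩
    · intro x hx y hy
      exact hlink x hx y hy
  · -- lex
    have hwL : chainWord l (P ++ a :: b :: c :: S) =
        chainWord l (P ++ [a]) ++ (l a b :: l b c :: chainWord l (c :: S)) := by
      rw [chainWord_append l a P (b :: c :: S), chainWord_cons_cons, chainWord_cons_cons]
    have hwL' : chainWord l L' =
        chainWord l (P ++ [a]) ++ (l a b' :: l b' c :: chainWord l (c :: S)) := by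
      rw [hL'def, chainWord_append l a P (b' :: c :: S), chainWord_cons_cons, chainWord_cons_cons]
    rw [hdec, hwL, hwL']
    exact lex_append_left' (lex_two hlex (chainWord l (c :: S))) _
  · -- symmDiff
    rw [hdec]
    have h1 : {x | x ∈ P ++ a :: b :: c :: S} \ {x | x ∈ L'} = {b} := by
      ext x
      simp only [Set.mem_diff, Set.mem_setOf_eq, Set.mem_singleton_iff, hmemL, hmemL']
      constructor
      · rintro ⟨h1, h2⟩
        rcases h1 with h | rfl | rfl | rfl | h
        · exact absurd (Or.inl h) h2
        · exact absurd (Or.inr (Or.inl rfl)) h2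
        · rfl
        · exact absurd (Or.inr (Or.inr (Or.inr (Or.inl rfl)))) h2
        · exact absurd (Or.inr (Or.inr (Or.inr (Or.inr h)))) h2
      · rintro rfl
        refine ⟨Or.inr (Or.inr (Or.inl rfl)), ?_⟩
        rintro (h | rfl | h | rfl | h)
        · exact hbnot.1 h
        · exact hbnot.2.1 rfl
        · exact hbb' h.symm
        · exact hbnot.2.2.1 rfl
        · exact hbnot.2.2.2 h
    have h2 : {x | x ∈ L'} \ {x | x ∈ P ++ a :: b :: c :: S} = {b'} := by
      ext x
      simp only [Set.mem_diff, Set.mem_setOf_eq, Set.mem_singleton_iff, hmemL, hmemL']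
      constructor
      · rintro ⟨h1, h2⟩
        rcases h1 with h | rfl | rfl | rfl | h
        · exact absurd (Or.inl h) h2
        · exact absurd (Or.inr (Or.inl rfl)) h2
        · rfl
        · exact absurd (Or.inr (Or.inr (Or.inr (Or.inl rfl)))) h2
        · exact absurd (Or.inr (Or.inr (Or.inr (Or.inr h)))) h2
      · rintro rfl
        refine ⟨Or.inr (Or.inr (Or.inl rfl)), ?_⟩
        rintro (h | rfl | h | rfl | h)
        · exact hb'not.1 h
        · exact hb'not.2.1 rfl
        · exact hbb' h
        · exact hb'not.2.2.1 rfl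
        · exact hb'not.2.2.2 h
    rw [Set.symmDiff_def, h1, h2]
    rw [Set.union_comm, Set.singleton_union]
    exact Set.ncard_pair hbb'
lemma satBT_length {L : List α} (hL : IsSaturatedChain (⊥:α) ⊤ L) :
    L.length = r (⊤:α) + 1 := by
  have := rank_satChain l hEL r hr hr0 L ⊥ ⊤ hL
  omega

lemma satBT_finite : {M : List α | IsSaturatedChain (⊥:α) ⊤ M}.Finite := by
  apply (List.finite_length_le α (r (⊤:α) + 1)).subset
  intro M hM
  simp only [Set.mem_setOf_eq] at hM ⊢
  rw [satBT_length l hEL r hr hr0 hM]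

lemma conn_to_asc (L₀ : List α) (hL₀ : IsSaturatedChain (⊥:α) ⊤ L₀)
    (huniq : ∀ M, IsSaturatedChain (⊥:α) ⊤ M → M ≠ L₀ → ¬ (chainWord l M).Chain' (· ≤ ·)) :
    ∀ (N : ℕ) (L : List α), IsSaturatedChain (⊥:α) ⊤ L →
      {M : List α | IsSaturatedChain (⊥:α) ⊤ M ∧
        List.Lex (· < ·) (chainWord l M) (chainWord l L)}.ncard ≤ N →
      ∃ (m : ℕ) (f : ℕ → Set α), f 0 = {x | x ∈ L} ∧ f m = {x | x ∈ L₀} ∧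
        (∀ i ≤ m, IsMaxChain (· ≤ ·) (f i)) ∧
        ∀ i < m, (symmDiff (f i) (f (i+1))).ncard = 2 := by
  intro N
  induction N with
  | zero =>
    intro L hL hcard
    rcases eq_or_ne L L₀ with rfl | hne
    · exact ⟨0, fun _ => {x | x ∈ L}, rfl, rfl,
        fun i _ => maxChain_of_satBT l hEL r hr hr0 hL, fun i hi => absurd hi (by omega)⟩
    · exfalso
      have hnasc := huniq L hL hne
      obtain ⟨L', hL', hlex, hsym⟩ := descent_step l hEL r hr hr0 hL hnasc
      have hmem : L' ∈ {M : List α | IsSaturatedChain (⊥:α) ⊤ M ∧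
          List.Lex (· < ·) (chainWord l M) (chainWord l L)} := ⟨hL', hlex⟩
      have hfin : {M : List α | IsSaturatedChain (⊥:α) ⊤ M ∧
          List.Lex (· < ·) (chainWord l M) (chainWord l L)}.Finite :=
        (satBT_finite l hEL r hr hr0).subset (fun M hM => hM.1)
      have := (Set.ncard_pos hfin).mpr ⟨L', hmem⟩
      omega
  | succ N ih =>
    intro L hL hcard
    rcases eq_or_ne L L₀ with rfl | hne
    · exact ⟨0, fun _ => {x | x ∈ L}, rfl, rfl,
        fun i _ => maxChain_of_satBT l hEL r hr hr0 hL, fun i hi => absurd hi (by omega)⟩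
    have hnasc := huniq L hL hne
    obtain ⟨L', hL', hlex, hsym⟩ := descent_step l hEL r hr hr0 hL hnasc
    set SL := {M : List α | IsSaturatedChain (⊥:α) ⊤ M ∧
        List.Lex (· < ·) (chainWord l M) (chainWord l L)} with hSLdef
    set SL' := {M : List α | IsSaturatedChain (⊥:α) ⊤ M ∧
        List.Lex (· < ·) (chainWord l M) (chainWord l L')} with hSL'def
    have hfin : SL.Finite := (satBT_finite l hEL r hr hr0).subset (fun M hM => hM.1)
    have hL'mem : L' ∈ SL := ⟨hL', hlex⟩
    have hsub : SL' ⊆ SL \ {L'} := by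
      intro M hM
      obtain ⟨hMsat, hMlex⟩ := hM
      have htrans : Transitive ((· < ·) : Λ → Λ → Prop) := fun _ _ _ h h' => lt_trans h h'
      refine ⟨⟨hMsat, lex_trans' htrans hMlex hlex⟩, ?_⟩
      intro hML'
      simp only [Set.mem_singleton_iff] at hML'
      subst hML'
      exact lex_irrefl' (fun x => lt_irrefl x) _ hMlex
    have hcard' : SL'.ncard ≤ N := by
      have h1 : (SL \ {L'}).ncard = SL.ncard - 1 := Set.ncard_diff_singleton_of_mem hL'mem
      have h2 : SL'.ncard ≤ (SL \ {L'}).ncard :=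
        Set.ncard_le_ncard hsub (hfin.subset Set.diff_subset)
      have h3 : 1 ≤ SL.ncard := (Set.ncard_pos hfin).mpr ⟨L', hL'mem⟩
      omega
    obtain ⟨m, f, hf0, hfm, hfmax, hfsym⟩ := ih L' hL' hcard'
    refine ⟨m + 1, fun i => if i = 0 then {x | x ∈ L} else f (i - 1), by simp, ?_, ?_, ?_⟩
    · simp only [Nat.succ_ne_zero, if_neg, Nat.add_sub_cancel]
      exact hfm
    · intro i hi
      rcases Nat.eq_zero_or_pos i with rfl | hpos
      · simpa using maxChain_of_satBT l hEL r hr hr0 hL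
      · simp only [Nat.pos_iff_ne_zero.mp hpos, if_neg]
        exact hfmax (i - 1) (by omega)
    · intro i hi
      rcases Nat.eq_zero_or_pos i with rfl | hpos
      · simp only [if_pos rfl, Nat.zero_add, if_neg one_ne_zero, Nat.sub_self]
        rw [hf0]
        exact hsym
      · have h1 : i ≠ 0 := by omega
        have h2 : i + 1 ≠ 0 := by omega
        simp only [if_neg h1, if_neg h2]
        have : i + 1 - 1 = (i - 1) + 1 := by omega
        rw [this]
        exact hfsym (i - 1) (by omega)

lemma strongConn : StronglyConnectedOrder α := by
  intro c d hc hd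
  obtain ⟨Lc, hLc, hLcset⟩ := satBT_of_maxChain l hEL r hr hr0 hc
  obtain ⟨Ld, hLd, hLdset⟩ := satBT_of_maxChain l hEL r hr hr0 hd
  obtain ⟨L₀, hL₀, hL₀asc, hL₀uniq⟩ := hEL ⊥ ⊤ bot_le
  have huniq : ∀ M, IsSaturatedChain (⊥:α) ⊤ M → M ≠ L₀ →
      ¬ (chainWord l M).Chain' (· ≤ ·) := fun M hM hne => (hL₀uniq M hM hne).1
  obtain ⟨m1, f1, hf10, hf1m, hf1max, hf1sym⟩ :=
    conn_to_asc l hEL r hr hr0 L₀ hL₀ huniq _ Lc hLc le_rfl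
  obtain ⟨m2, f2, hf20, hf2m, hf2max, hf2sym⟩ :=
    conn_to_asc l hEL r hr hr0 L₀ hL₀ huniq _ Ld hLd le_rfl
  refine ⟨m1 + m2, fun i => if i ≤ m1 then f1 i else f2 (m1 + m2 - i), ?_, ?_, ?_, ?_⟩
  · simp only [Nat.zero_le, if_pos]
    rw [hf10, hLcset]
  · rcases Nat.eq_zero_or_pos m2 with rfl | hpos
    · simp only [Nat.add_zero, le_refl, if_pos]
      rw [hf1m, ← hf2m, hf20, hLdset]
    · have : ¬ (m1 + m2 ≤ m1) := by omega
      simp only [if_neg this, Nat.sub_self]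
      rw [hf20, hLdset]
  · intro i hi
    by_cases h : i ≤ m1
    · simp only [if_pos h]; exact hf1max i h
    · simp only [if_neg h]; exact hf2max _ (by omega)
  · intro i hi
    by_cases h1 : i + 1 ≤ m1
    · simp only [if_pos (by omega : i ≤ m1), if_pos h1]
      exact hf1sym i (by omega)
    · by_cases h2 : i ≤ m1
      · -- i = m1, m2 ≥ 1
        have hieq : i = m1 := by omega
        have hm2 : 1 ≤ m2 := by omega
        simp only [if_pos h2, if_neg h1]
        rw [hieq, hf1m, ← hf2m]
        have hstep := hf2sym (m1 + m2 - (m1 + 1)) (by omega)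
        have : m1 + m2 - (m1 + 1) + 1 = m2 := by omega
        rw [this] at hstep
        rw [symmDiff_comm]
        exact hstep
      · simp only [if_neg h2, if_neg h1]
        have hstep := hf2sym (m1 + m2 - (i + 1)) (by omega)
        have : m1 + m2 - (i + 1) + 1 = m1 + m2 - i := by omega
        rw [this] at hstep
        rw [symmDiff_comm]
        exact hstep
omit hEL hr hr0 in
lemma mem_of_getLast?' : ∀ (L : List α) (a : α), L.getLast? = some a → a ∈ L := by
  intro L
  induction L with
  | nil => intro a h; simp at h
  | cons x T ih =>
    intro a h
    cases T with
    | nil => simp [List.getLast?] at h; simp [h]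
    | cons y T' =>
      rw [show (x :: y :: T') = [x] ++ (y :: T') from rfl, List.getLast?_append] at h
      simp [List.getLast?_eq_some_getLast] at h
      simp [ih a (by rw [List.getLast?_eq_some_getLast (by simp), h])]

lemma exists_maxChain_mem (x : α) : ∃ c, IsMaxChain (· ≤ ·) c ∧ x ∈ c := by
  obtain ⟨L1, hL1, -, -⟩ := hEL ⊥ x bot_le
  obtain ⟨L2, hL2, -, -⟩ := hEL x ⊤ le_top
  obtain ⟨h1h, h1l, h1c⟩ := hL1
  obtain ⟨h2h, h2l, h2c⟩ := hL2
  cases L2 with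
  | nil => simp at h2h
  | cons z t =>
  simp at h2h
  have h2h2 : x = z := h2h.symm
  subst h2h2
  have hxL1 : x ∈ L1 := mem_of_getLast?' L1 x h1l
  have hL1ne : L1 ≠ [] := by rintro rfl; simp at h1h
  refine ⟨{w | w ∈ L1 ++ t}, maxChain_of_satBT l hEL r hr hr0 ⟨?_, ?_, ?_⟩, by simp [hxL1]⟩
  · rw [List.head?_append]
    cases L1 with
    | nil => simp at h1h
    | cons p P => simp at h1h ⊢; exact h1h
  · cases t with
    | nil =>
      simp only [List.append_nil]
      simp [List.getLast?] at h2l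
      rw [h1l, h2l]
    | cons b t' =>
      rw [List.getLast?_append]
      rw [show (x :: b :: t') = [x] ++ (b :: t') from rfl, List.getLast?_append] at h2l
      cases hbt : (b :: t').getLast? with
      | none =>
        have hne2 := List.getLast?_isSome.mpr (by simp : (b :: t') ≠ [])
        rw [hbt] at hne2; simp at hne2
      | some w => rw [hbt] at h2l; simp at h2l ⊢; exact h2l
  · rw [List.Chain', List.isChain_append]
    refine ⟨h1c, h2c.tail, ?_⟩
    intro p hp q hq
    rw [h1l] at hp
    simp at hp
    subst hp
    cases t with
    | nil => simp at hq
    | cons b t' =>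
      simp at hq
      subst hq
      exact (List.isChain_cons_cons.mp h2c).1

lemma adjacent_step {A c d : Set α} (hc : IsMaxChain (· ≤ ·) c) (hd : IsMaxChain (· ≤ ·) d)
    (hsym : (symmDiff c d).ncard = 2) {y : α} (hy : y ∈ c) (hyA : y ∈ A)
    (hAc : ∃! z, z ∈ c ∧ z ∈ A) (hAd : ∃! z, z ∈ d ∧ z ∈ A) :
    ∃ z ∈ d, z ∈ A ∧ r z = r y := by
  classical
  have hcd : c ≠ d := by
    rintro rfl
    rw [symmDiff_self] at hsym
    simp [Set.bot_eq_empty] at hsym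
  have hdisj : Disjoint (c \ d) (d \ c) :=
    Set.disjoint_left.mpr (fun x hx hx' => hx.2 hx'.1)
  have hunion : symmDiff c d = (c \ d) ∪ (d \ c) := by
    rw [Set.symmDiff_def]
  have hcard : (c \ d).ncard + (d \ c).ncard = 2 := by
    rw [← Set.ncard_union_eq hdisj (Set.toFinite _) (Set.toFinite _), ← hunion, hsym]
  have hcd_ne : (c \ d).Nonempty := by
    rw [Set.nonempty_iff_ne_empty]
    intro h
    rw [Set.diff_eq_empty] at h
    exact hcd (hc.2 hd.1 h)
  have hdc_ne : (d \ c).Nonempty := by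
    rw [Set.nonempty_iff_ne_empty]
    intro h
    rw [Set.diff_eq_empty] at h
    exact hcd (hd.2 hc.1 h).symm
  have hone : (c \ d).ncard = 1 ∧ (d \ c).ncard = 1 := by
    have p1 := (Set.ncard_pos (Set.toFinite _)).mpr hcd_ne
    have p2 := (Set.ncard_pos (Set.toFinite _)).mpr hdc_ne
    omega
  obtain ⟨u, hu⟩ := Set.ncard_eq_one.mp hone.1
  obtain ⟨v, hv⟩ := Set.ncard_eq_one.mp hone.2
  have hud : u ∈ c \ d := by rw [hu]; rfl
  have hvd : v ∈ d \ c := by rw [hv]; rfl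
  by_cases hyu : y = u
  · obtain ⟨b, ⟨hbd, hbA⟩, -⟩ := hAd
    have hbv : b = v := by
      by_contra hbv
      have hbc : b ∈ c := by
        by_contra hbc
        have hmem : b ∈ d \ c := ⟨hbd, hbc⟩
        rw [hv] at hmem
        exact hbv hmem
      obtain ⟨y', -, hy'uniq⟩ := hAc
      have hby : b = y := (hy'uniq b ⟨hbc, hbA⟩).trans (hy'uniq y ⟨hy, hyA⟩).symm
      rw [hby, hyu] at hbd
      exact hud.2 hbd
    have hruv : r u = r v := by
      by_contra hne
      obtain ⟨w, hwd, hwr⟩ := exists_rank_in_maxChain l hEL r hr hr0 hd (r u)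
        (rank_le_top l hEL r hr hr0 u)
      have hwv : w ≠ v := fun h => hne (by rw [← hwr, h])
      have hwc : w ∈ c := by
        by_contra hwc
        have hmem : w ∈ d \ c := ⟨hwd, hwc⟩
        rw [hv] at hmem
        exact hwv hmem
      have huw : u = w := eq_of_chain_rank l hEL r hr hr0 hc.1 hud.1 hwc hwr.symm
      exact hud.2 (huw ▸ hwd)
    exact ⟨v, hvd.1, hbv ▸ hbA, by rw [← hruv, hyu]⟩
  · have hyd : y ∈ d := by
      by_contra hyd
      have hmem : y ∈ c \ d := ⟨hy, hyd⟩
      rw [hu] at hmem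
      exact hyu hmem
    exact ⟨y, hyd, hyA, rfl⟩

end ACC

/-- In a finite graded bounded lattice with an EL-labeling, the antichain cutsets are
exactly the (nonempty) level sets of the rank function. -/
theorem antichain_cutsets_of_ELLabeled_lattice {α Λ : Type*} [Lattice α] [BoundedOrder α]
    [Fintype α] [PartialOrder Λ] (l : α → α → Λ)
    (hEL : IsELLabeling (· ≤ ·) (· < ·) l)
    (r : α → ℕ) (hr : ∀ x y : α, x ⋖ y → r y = r x + 1) (hr0 : r ⊥ = 0) :
    ∀ A : Set α, IsAntichainCutset A ↔ ∃ k : ℕ, A = {x | r x = k} ∧ A.Nonempty := by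
  intro A
  constructor
  · intro hA
    obtain ⟨L₀, hL₀, hL₀asc, hL₀uniq⟩ := hEL ⊥ ⊤ bot_le
    have hc₀ := maxChain_of_satBT l hEL r hr hr0 hL₀
    obtain ⟨a₀, ⟨ha₀c, ha₀A⟩, -⟩ := hA _ hc₀
    set k := r a₀ with hk
    have key : ∀ c, IsMaxChain (· ≤ ·) c → ∃ z ∈ c, z ∈ A ∧ r z = k := by
      intro c hc
      obtain ⟨nn, f, hf0, hfn, hfmax, hfsym⟩ :=
        strongConn l hEL r hr hr0 {x | x ∈ L₀} c hc₀ hc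
      have hstep : ∀ i, i ≤ nn → ∃ z ∈ f i, z ∈ A ∧ r z = k := by
        intro i
        induction i with
        | zero => intro _; exact ⟨a₀, by rw [hf0]; exact ha₀c, ha₀A, rfl⟩
        | succ i ih =>
          intro hi
          obtain ⟨z, hz, hzA, hzr⟩ := ih (by omega)
          obtain ⟨z', hz', hz'A, hz'r⟩ := adjacent_step l hEL r hr hr0
            (hfmax i (by omega)) (hfmax (i+1) hi) (hfsym i (by omega)) hz hzA
            (hA _ (hfmax i (by omega))) (hA _ (hfmax (i+1) hi))
          exact ⟨z', hz', hz'A, by rw [hz'r, hzr]⟩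
      obtain ⟨z, hz, hzA, hzr⟩ := hstep nn le_rfl
      rw [hfn] at hz
      exact ⟨z, hz, hzA, hzr⟩
    refine ⟨k, ?_, ⟨a₀, ha₀A⟩⟩
    ext x
    simp only [Set.mem_setOf_eq]
    constructor
    · intro hxA
      obtain ⟨c, hc, hxc⟩ := exists_maxChain_mem l hEL r hr hr0 x
      obtain ⟨z, hzc, hzA, hzr⟩ := key c hc
      obtain ⟨y', -, hy'uniq⟩ := hA c hc
      have hxz : x = z := (hy'uniq x ⟨hxc, hxA⟩).trans (hy'uniq z ⟨hzc, hzA⟩).symm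
      rw [hxz]; exact hzr
    · intro hxr
      obtain ⟨c, hc, hxc⟩ := exists_maxChain_mem l hEL r hr hr0 x
      obtain ⟨z, hzc, hzA, hzr⟩ := key c hc
      have hxz : x = z := eq_of_chain_rank l hEL r hr hr0 hc.1 hxc hzc (by rw [hxr, hzr])
      rw [hxz]; exact hzA
  · rintro ⟨k, rfl, ⟨x₀, hx₀⟩⟩
    intro c hc
    simp only [Set.mem_setOf_eq] at hx₀
    have hk : k ≤ r ⊤ := hx₀ ▸ rank_le_top l hEL r hr hr0 x₀
    obtain ⟨y, hyc, hyr⟩ := exists_rank_in_maxChain l hEL r hr hr0 hc k hk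
    refine ⟨y, ⟨hyc, hyr⟩, ?_⟩
    rintro z ⟨hzc, hzr⟩
    exact eq_of_chain_rank l hEL r hr hr0 hc.1 hzc hyc (by rw [hzr, hyr])
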